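/- Every stable binary phylogenetic network is tree-based. -/

import Mathlib

/-- Out-degree of `v` in the digraph with arc relation `arc`. -/
def outdeg {V : Type} [Fintype V] [DecidableEq V] (arc : V → V → Bool) (v : V) : ℕ :=
  (Finset.univ.filter fun w => arc v w = true).card

/-- In-degree of `v` in the digraph with arc relation `arc`. -/
def indeg {V : Type} [Fintype V] [DecidableEq V] (arc : V → V → Bool) (v : V) : ℕ :=
  (Finset.univ.filter fun u => arc u v = true).card

/-- A rooted binary phylogenetic network on the finite vertex type `V`:
a directed acyclic graph with a single root of indegree 0 and outdegree 1 or 2,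
all other vertices being leaves (indegree 1, outdegree 0),
reticulations (indegree 2, outdegree 1) or tree-vertices (indegree 1, outdegree 2). -/
structure BinNet (V : Type) [Fintype V] [DecidableEq V] where
  arc : V → V → Bool
  root : V
  acyclic : ∀ v, ¬ Relation.TransGen (fun a b => arc a b = true) v v
  root_indeg : indeg arc root = 0
  root_outdeg : outdeg arc root = 1 ∨ outdeg arc root = 2
  vertex_types : ∀ v, v ≠ root →
    (indeg arc v = 1 ∧ outdeg arc v = 0) ∨
    (indeg arc v = 2 ∧ outdeg arc v = 1) ∨
    (indeg arc v = 1 ∧ outdeg arc v = 2)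

variable {V : Type} [Fintype V] [DecidableEq V]

/-- A leaf of the network. -/
def BinNet.IsLeaf (N : BinNet V) (v : V) : Prop := outdeg N.arc v = 0

/-- A reticulation of the network. -/
def BinNet.IsRetic (N : BinNet V) (v : V) : Prop := indeg N.arc v = 2

/-- A tree-vertex of the network. -/
def BinNet.IsTreeVertex (N : BinNet V) (v : V) : Prop :=
  v ≠ N.root ∧ indeg N.arc v = 1 ∧ outdeg N.arc v = 2

/-- An omnian: a non-leaf vertex all of whose children are reticulations. -/
def BinNet.IsOmnian (N : BinNet V) (v : V) : Prop :=
  outdeg N.arc v ≠ 0 ∧ ∀ w, N.arc v w = true → N.IsRetic w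

/-- `T` is a rooted spanning tree of `N` (using a subset of the arcs of `N`,
every non-root vertex having exactly one incoming tree arc). -/
def BinNet.IsSpanningTree (N : BinNet V) (T : V → V → Bool) : Prop :=
  (∀ u v, T u v = true → N.arc u v = true) ∧
  (∀ u, T u N.root = false) ∧
  (∀ v, v ≠ N.root → indeg T v = 1)

/-- `N` is tree-based: it has a rooted spanning tree without dummy leaves,
i.e. every leaf of the spanning tree is a leaf of `N`. -/
def BinNet.TreeBased (N : BinNet V) : Prop :=
  ∃ T, N.IsSpanningTree T ∧ ∀ v, outdeg T v = 0 → outdeg N.arc v = 0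

/-- A vertex `v` is stable if there is a leaf `ℓ` such that every directed path from the
root to `ℓ` passes through `v`. -/
def BinNet.StableVertex {V : Type} [Fintype V] [DecidableEq V] (N : BinNet V) (v : V) : Prop :=
  ∃ ℓ, N.IsLeaf ℓ ∧ ∀ p : List V, p.head? = some N.root → p.getLast? = some ℓ →
    p.Chain' (fun a b => N.arc a b = true) → v ∈ p

/-- The network is stable if every reticulation is stable. -/
def BinNet.Stable {V : Type} [Fintype V] [DecidableEq V] (N : BinNet V) : Prop :=
  ∀ r, N.IsRetic r → N.StableVertex r

-- generic list chain lemmas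
lemma chain'_tail_transGen {α : Type*} {R : α → α → Prop} :
    ∀ (a : α) (t : List α), (a :: t).Chain' R → ∀ z ∈ t, Relation.TransGen R a z := by
  intro a t
  induction t generalizing a with
  | nil => intro _ z hz; simp at hz
  | cons b t ih =>
    intro h z hz
    have hab : R a b := (List.isChain_cons_cons.mp h).1
    have ht : (b :: t).Chain' R := (List.isChain_cons_cons.mp h).2
    rcases List.mem_cons.mp hz with rfl | hz
    · exact Relation.TransGen.single hab
    · exact (Relation.TransGen.single hab).trans (ih b ht z hz)

lemma chain'_split {α : Type*} {R : α → α → Prop} {x : α} :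
    ∀ (l : List α), l.Chain' R → x ∈ l →
      ∃ t, (x :: t).Chain' R ∧ (x :: t).getLast? = l.getLast? := by
  intro l
  induction l with
  | nil => intro _ h; simp at h
  | cons a l ih =>
    intro hc hm
    rcases List.mem_cons.mp hm with rfl | hm
    · exact ⟨l, hc, rfl⟩
    · obtain ⟨t, h1, h2⟩ := ih hc.tail hm
      refine ⟨t, h1, ?_⟩
      rw [h2]
      cases l with
      | nil => simp at hm
      | cons b l' => simp [List.getLast?_cons_cons]

lemma mem_of_getLast?' {α : Type*} {l : List α} {y : α} (h : l.getLast? = some y) : y ∈ l := by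
  induction l with
  | nil => simp at h
  | cons a l ih =>
    cases l with
    | nil => simp at h; simp [h]
    | cons b l' =>
      rw [List.getLast?_cons_cons] at h
      exact List.mem_cons.mpr (Or.inr (ih h))

namespace BinNet

lemma arc_wf (N : BinNet V) : WellFounded (fun u v : V => N.arc u v = true) := by
  haveI hi : IsIrrefl V (Relation.TransGen (fun a b => N.arc a b = true)) := ⟨N.acyclic⟩
  exact Subrelation.wf (r := Relation.TransGen (fun a b => N.arc a b = true))
    (q := fun u v : V => N.arc u v = true) (fun h => Relation.TransGen.single h)
    (Finite.wellFounded_of_trans_of_irrefl (Relation.TransGen (fun a b => N.arc a b = true)))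

lemma no_arc_to_root (N : BinNet V) (u : V) : N.arc u N.root = false := by
  by_contra h
  have h' : N.arc u N.root = true := by
    cases hb : N.arc u N.root
    · exact absurd hb h
    · rfl
  have : u ∈ Finset.univ.filter fun u => N.arc u N.root = true :=
    Finset.mem_filter.mpr ⟨Finset.mem_univ _, h'⟩
  have h0 := N.root_indeg
  unfold indeg at h0
  rw [Finset.card_eq_zero] at h0
  rw [h0] at this
  simp at this

lemma exists_parent (N : BinNet V) {v : V} (hv : v ≠ N.root) : ∃ u, N.arc u v = true := by
  have hpos : 0 < indeg N.arc v := by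
    rcases N.vertex_types v hv with ⟨h, _⟩ | ⟨h, _⟩ | ⟨h, _⟩ <;> omega
  unfold indeg at hpos
  obtain ⟨u, hu⟩ := Finset.card_pos.mp hpos
  exact ⟨u, (Finset.mem_filter.mp hu).2⟩

lemma reach_root (N : BinNet V) (v : V) : ∃ l : List V,
    l.head? = some N.root ∧ l.getLast? = some v ∧
    l.Chain' (fun a b => N.arc a b = true) := by
  induction v using (arc_wf N).induction with
  | _ v ih =>
  by_cases hv : v = N.root
  · exact ⟨[v], by simp [hv], by simp, List.isChain_singleton v⟩
  · obtain ⟨u, hu⟩ := N.exists_parent hv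
    obtain ⟨l, h1, h2, h3⟩ := ih u hu
    have hln : l ≠ [] := by rintro rfl; simp at h1
    refine ⟨l ++ [v], ?_, ?_, ?_⟩
    · rw [List.head?_append_of_ne_nil l hln]; exact h1
    · rw [List.getLast?_append_of_ne_nil l (by simp)]; simp
    · apply List.isChain_append.mpr
      refine ⟨h3, List.isChain_singleton v, fun x hx y hy => ?_⟩
      simp only [List.head?_cons, Option.mem_def, Option.some.injEq] at hy
      rw [h2] at hx
      simp only [Option.mem_def, Option.some.injEq] at hx
      subst hx; subst hy; exact hu

end BinNet

namespace BinNet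

lemma retic_ne_root (N : BinNet V) {r : V} (hr : indeg N.arc r = 2) : r ≠ N.root := by
  intro h; rw [h, N.root_indeg] at hr; omega

lemma retic_outdeg (N : BinNet V) {r : V} (hr : indeg N.arc r = 2) : outdeg N.arc r = 1 := by
  rcases N.vertex_types r (N.retic_ne_root hr) with ⟨h, h'⟩ | ⟨h, h'⟩ | ⟨h, h'⟩ <;> omega

lemma unique_child (N : BinNet V) {r c w : V} (hr : outdeg N.arc r = 1)
    (hc : N.arc r c = true) (hw : N.arc r w = true) : w = c := by
  unfold outdeg at hr
  have := Finset.card_le_one.mp (le_of_eq hr) w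
    (Finset.mem_filter.mpr ⟨Finset.mem_univ _, hw⟩) c
    (Finset.mem_filter.mpr ⟨Finset.mem_univ _, hc⟩)
  exact this

lemma unique_parent (N : BinNet V) {v u u' : V} (hv : indeg N.arc v = 1)
    (hu : N.arc u v = true) (hu' : N.arc u' v = true) : u' = u := by
  unfold indeg at hv
  exact Finset.card_le_one.mp (le_of_eq hv) u'
    (Finset.mem_filter.mpr ⟨Finset.mem_univ _, hu'⟩) u
    (Finset.mem_filter.mpr ⟨Finset.mem_univ _, hu⟩)

lemma no_self_arc (N : BinNet V) {v : V} (h : N.arc v v = true) : False :=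
  N.acyclic v (Relation.TransGen.single h)

lemma no_stack (N : BinNet V) (hstable : N.Stable) {r c : V}
    (hr : indeg N.arc r = 2) (hrc : N.arc r c = true) (hc : indeg N.arc c = 2) : False := by
  have hro : outdeg N.arc r = 1 := N.retic_outdeg hr
  -- second parent p of c
  obtain ⟨p, hpmem, hpr⟩ : ∃ p ∈ Finset.univ.filter fun u => N.arc u c = true, p ≠ r := by
    apply Finset.exists_mem_ne
    unfold indeg at hc; omega
  have hpc : N.arc p c = true := (Finset.mem_filter.mp hpmem).2
  have hcp : c ≠ p := by
    rintro rfl; exact N.no_self_arc hpc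
  -- stability of r
  obtain ⟨ℓ, hℓ, H⟩ := hstable r hr
  have hrℓ : r ≠ ℓ := by
    intro h; rw [BinNet.IsLeaf, ← h] at hℓ; omega
  obtain ⟨Q, hQh, hQl, hQc⟩ := N.reach_root ℓ
  have hrQ : r ∈ Q := H Q hQh hQl hQc
  obtain ⟨t, htc, htl⟩ := chain'_split Q hQc hrQ
  rw [hQl] at htl
  have htnil : t ≠ [] := by
    rintro rfl; simp at htl; exact hrℓ htl
  obtain ⟨w, t', rfl⟩ : ∃ w t', t = w :: t' := by
    cases t with
    | nil => exact absurd rfl htnil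
    | cons w t' => exact ⟨w, t', rfl⟩
  have hw : c = w := (N.unique_child hro hrc (List.isChain_cons_cons.mp htc).1).symm
  subst hw
  have htl' : (c :: t').getLast? = some ℓ := by
    rw [List.getLast?_cons_cons] at htl; exact htl
  have hrt : r ∉ c :: t' := by
    intro hmem
    exact N.acyclic r (chain'_tail_transGen r (c :: t') htc r hmem)
  -- path to p avoiding r
  obtain ⟨P, hPh, hPl, hPc⟩ := N.reach_root p
  have hrP : r ∉ P := by
    intro hrP
    obtain ⟨s, hsc, hsl⟩ := chain'_split P hPc hrP
    rw [hPl] at hsl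
    have hsnil : s ≠ [] := by
      rintro rfl; simp at hsl; exact hpr hsl.symm
    obtain ⟨w₁, s', rfl⟩ : ∃ w₁ s', s = w₁ :: s' := by
      cases s with
      | nil => exact absurd rfl hsnil
      | cons w₁ s' => exact ⟨w₁, s', rfl⟩
    have hw₁ : c = w₁ := (N.unique_child hro hrc (List.isChain_cons_cons.mp hsc).1).symm
    subst hw₁
    have hpmem' : p ∈ r :: c :: s' := mem_of_getLast?' hsl
    rcases List.mem_cons.mp hpmem' with h | h
    · exact hpr h
    rcases List.mem_cons.mp h with h | h
    · exact hcp h.symm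
    · have : Relation.TransGen (fun a b => N.arc a b = true) c p :=
        chain'_tail_transGen c s' ((List.isChain_cons_cons.mp hsc).2) p h
      exact N.acyclic c (this.trans (Relation.TransGen.single hpc))
  -- combined path
  have hPnil : P ≠ [] := by rintro rfl; simp at hPh
  have hnew : r ∈ P ++ (c :: t') := by
    apply H
    · rw [List.head?_append_of_ne_nil P hPnil]; exact hPh
    · rw [List.getLast?_append_of_ne_nil P (by simp)]; exact htl'
    · apply List.isChain_append.mpr
      refine ⟨hPc, (List.isChain_cons_cons.mp htc).2, fun x hx y hy => ?_⟩
      rw [hPl] at hx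
      simp only [Option.mem_def, Option.some.injEq, List.head?_cons] at hx hy
      subst hx; subst hy; exact hpc
  rcases List.mem_append.mp hnew with h | h
  · exact hrP h
  · exact hrt h

lemma omnian_outdeg (N : BinNet V) (hstable : N.Stable) {u : V} (hu : N.IsOmnian u) :
    1 ≤ outdeg N.arc u ∧ (u ≠ N.root → outdeg N.arc u = 2) := by
  constructor
  · have := hu.1; omega
  · intro hne
    rcases N.vertex_types u hne with ⟨h, h'⟩ | ⟨h, h'⟩ | ⟨h, h'⟩
    · exact absurd h' hu.1
    · exfalso
      obtain ⟨c, hc⟩ : ∃ c, N.arc u c = true := by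
        unfold outdeg at h'
        obtain ⟨c, hcmem⟩ := Finset.card_pos.mp (by omega : 0 < (Finset.univ.filter fun w => N.arc u w = true).card)
        exact ⟨c, (Finset.mem_filter.mp hcmem).2⟩
      exact N.no_stack hstable h hc (hu.2 c hc)
    · exact h'

end BinNet

/-- Every stable binary phylogenetic network is tree-based. -/
theorem stmt_11 {V : Type} [Fintype V] [DecidableEq V] (N : BinNet V)
    (hstable : N.Stable) :
    N.TreeBased := by
  classical
  -- the bipartite "children" map from omnians to reticulations
  let t : {v : V // N.IsOmnian v} → Finset V :=
    fun u => Finset.univ.filter fun w => N.arc u.val w = true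
  have hall : ∀ s : Finset {v : V // N.IsOmnian v}, s.card ≤ (s.biUnion t).card := by
    intro s
    set S : Finset V := s.image Subtype.val with hS
    have hcard : S.card = s.card := Finset.card_image_of_injective _ Subtype.val_injective
    set Rs : Finset V := s.biUnion t with hRs
    have hSomn : ∀ u ∈ S, N.IsOmnian u := by
      intro u hu
      obtain ⟨u', _, rfl⟩ := Finset.mem_image.mp hu
      exact u'.2
    have hch : ∀ u ∈ S, ∀ w, N.arc u w = true → w ∈ Rs := by
      intro u hu w hw
      obtain ⟨u', hu', rfl⟩ := Finset.mem_image.mp hu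
      exact Finset.mem_biUnion.mpr ⟨u', hu', Finset.mem_filter.mpr ⟨Finset.mem_univ _, hw⟩⟩
    have hret : ∀ r ∈ Rs, indeg N.arc r = 2 := by
      intro r hr
      obtain ⟨u', _, hmem⟩ := Finset.mem_biUnion.mp hr
      exact u'.2.2 r (Finset.mem_filter.mp hmem).2
    -- sum of outdegrees of S
    have e1 : ∀ u ∈ S, outdeg N.arc u = (Rs.filter fun w => N.arc u w = true).card := by
      intro u hu
      unfold outdeg
      congr 1
      apply Finset.Subset.antisymm
      · intro w hw
        have hw' := (Finset.mem_filter.mp hw).2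
        exact Finset.mem_filter.mpr ⟨hch u hu w hw', hw'⟩
      · intro w hw
        exact Finset.mem_filter.mpr ⟨Finset.mem_univ _, (Finset.mem_filter.mp hw).2⟩
    have upper : ∑ u ∈ S, outdeg N.arc u ≤ 2 * Rs.card := by
      calc ∑ u ∈ S, outdeg N.arc u
          = ∑ u ∈ S, (Rs.filter fun w => N.arc u w = true).card :=
            Finset.sum_congr rfl e1
        _ = ∑ u ∈ S, ∑ w ∈ Rs, (if N.arc u w = true then 1 else 0) := by
            apply Finset.sum_congr rfl; intro u _; exact Finset.card_filter _ _
        _ = ∑ w ∈ Rs, ∑ u ∈ S, (if N.arc u w = true then 1 else 0) := Finset.sum_comm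
        _ = ∑ w ∈ Rs, (S.filter fun u => N.arc u w = true).card := by
            apply Finset.sum_congr rfl; intro w _; exact (Finset.card_filter _ _).symm
        _ ≤ ∑ w ∈ Rs, indeg N.arc w := by
            apply Finset.sum_le_sum; intro w _
            exact Finset.card_le_card (Finset.filter_subset_filter _ (Finset.subset_univ S))
        _ = ∑ w ∈ Rs, 2 := Finset.sum_congr rfl hret
        _ = 2 * Rs.card := by rw [Finset.sum_const]; ring
    have lower : 2 * S.card ≤ (∑ u ∈ S, outdeg N.arc u) + 1 := by
      calc 2 * S.card = ∑ _u ∈ S, 2 := by rw [Finset.sum_const]; ring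
        _ ≤ ∑ u ∈ S, (outdeg N.arc u + if u = N.root then 1 else 0) := by
            apply Finset.sum_le_sum
            intro u hu
            obtain ⟨h1, h2⟩ := N.omnian_outdeg hstable (hSomn u hu)
            by_cases hur : u = N.root
            · simp [hur] at h1 ⊢; omega
            · simp [hur]; exact le_of_eq (h2 hur).symm
        _ = (∑ u ∈ S, outdeg N.arc u) + ∑ u ∈ S, (if u = N.root then 1 else 0) :=
            Finset.sum_add_distrib
        _ ≤ (∑ u ∈ S, outdeg N.arc u) + 1 := by
            apply Nat.add_le_add_left
            rw [Finset.sum_ite_eq' S N.root (fun _ => 1)]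
            split <;> omega
    rw [← hcard]; omega
  obtain ⟨f, hfinj, hft⟩ := (Finset.all_card_le_biUnion_card_iff_exists_injective t).mp hall
  have hfarc : ∀ u : {v : V // N.IsOmnian v}, N.arc u.val (f u) = true := by
    intro u
    exact (Finset.mem_filter.mp (hft u)).2
  have hfret : ∀ u : {v : V // N.IsOmnian v}, indeg N.arc (f u) = 2 := by
    intro u
    exact u.2.2 _ (hfarc u)
  -- parent choice
  let pa : V → V := fun v =>
    if h : ∃ u : {x : V // N.IsOmnian x}, f u = v then (h.choose).val
    else if h2 : ∃ u, N.arc u v = true then h2.choose else v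
  have hpa : ∀ v, v ≠ N.root → N.arc (pa v) v = true := by
    intro v hv
    by_cases h : ∃ u : {x : V // N.IsOmnian x}, f u = v
    · simp only [pa, dif_pos h]
      have := hfarc h.choose
      rw [h.choose_spec] at this
      exact this
    · have h2 : ∃ u, N.arc u v = true := N.exists_parent hv
      simp only [pa, dif_neg h, dif_pos h2]
      exact h2.choose_spec
  let T : V → V → Bool := fun u v => decide (v ≠ N.root ∧ pa v = u)
  have hT : ∀ u v, T u v = true ↔ (v ≠ N.root ∧ pa v = u) := by
    intro u v; simp [T]
  refine ⟨T, ⟨?_, ?_, ?_⟩, ?_⟩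
  · intro u v h
    obtain ⟨hv, hpu⟩ := (hT u v).mp h
    rw [← hpu]
    exact hpa v hv
  · intro u
    have : ¬ (N.root ≠ N.root ∧ pa N.root = u) := by simp
    simpa [T] using this
  · intro v hv
    unfold indeg
    have : (Finset.univ.filter fun u => T u v = true) = {pa v} := by
      ext u
      simp only [Finset.mem_filter, Finset.mem_univ, true_and, Finset.mem_singleton, hT]
      constructor
      · rintro ⟨_, h⟩; exact h.symm
      · rintro rfl; exact ⟨hv, rfl⟩
    rw [this, Finset.card_singleton]
  · intro v hout
    by_contra hNv
    have hnoT : ∀ w, ¬ T v w = true := by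
      intro w hw
      have : w ∈ Finset.univ.filter fun w => T v w = true :=
        Finset.mem_filter.mpr ⟨Finset.mem_univ _, hw⟩
      unfold outdeg at hout
      rw [Finset.card_eq_zero] at hout
      rw [hout] at this
      simp at this
    by_cases hv : N.IsOmnian v
    · set r := f ⟨v, hv⟩ with hrdef
      have hrne : r ≠ N.root := N.retic_ne_root (hfret ⟨v, hv⟩)
      have hex : ∃ u : {x : V // N.IsOmnian x}, f u = r := ⟨⟨v, hv⟩, rfl⟩
      have hpar : pa r = v := by
        simp only [pa, dif_pos hex]
        have := hfinj hex.choose_spec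
        rw [this]
      exact hnoT r ((hT v r).mpr ⟨hrne, hpar⟩)
    · obtain ⟨w, hw, hwnr⟩ : ∃ w, N.arc v w = true ∧ ¬ indeg N.arc w = 2 := by
        rw [BinNet.IsOmnian] at hv
        push_neg at hv
        obtain ⟨w, hw1, hw2⟩ := hv hNv
        exact ⟨w, hw1, hw2⟩
      have hwne : w ≠ N.root := by
        intro h; rw [h, N.no_arc_to_root v] at hw; simp at hw
      have hwin : indeg N.arc w = 1 := by
        rcases N.vertex_types w hwne with ⟨h, _⟩ | ⟨h, _⟩ | ⟨h, _⟩
        · exact h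
        · exact absurd h hwnr
        · exact h
      have hnof : ¬ ∃ u : {x : V // N.IsOmnian x}, f u = w := by
        rintro ⟨u, rfl⟩
        exact hwnr (hfret u)
      have h2 : ∃ u, N.arc u w = true := ⟨v, hw⟩
      have hpaw : pa w = v := by
        simp only [pa, dif_neg hnof, dif_pos h2]
        exact N.unique_parent hwin hw h2.choose_spec
      exact hnoT w ((hT v w).mpr ⟨hwne, hpaw⟩)
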